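/- For a non-real quaternion α, the intersection of the centralizer C_α = {β : αβ = βα} with the similarity class [α] = {hαh⁻¹ : h ≠ 0} is exactly {α, ᾱ}. -/

import Mathlib

open Quaternion

private def qmk (a b c d : ℝ) : Quaternion ℝ := ⟨a, b, c, d⟩

@[simp] private lemma qmk_re (a b c d : ℝ) : (qmk a b c d).re = a := rfl
@[simp] private lemma qmk_imI (a b c d : ℝ) : (qmk a b c d).imI = b := rfl
@[simp] private lemma qmk_imJ (a b c d : ℝ) : (qmk a b c d).imJ = c := rfl
@[simp] private lemma qmk_imK (a b c d : ℝ) : (qmk a b c d).imK = d := rfl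

private lemma re_mul_comm' (a b : Quaternion ℝ) : (a * b).re = (b * a).re := by
  simp only [Quaternion.re_mul]; ring

private lemma re_conj (h α : Quaternion ℝ) (hh : h ≠ 0) :
    (h * α * h⁻¹).re = α.re := by
  rw [re_mul_comm', ← mul_assoc, inv_mul_cancel₀ hh, one_mul]

private lemma star_similar (α : Quaternion ℝ) (hα : α.im ≠ 0) :
    ∃ h : Quaternion ℝ, h ≠ 0 ∧ star α = h * α * h⁻¹ := by
  by_cases hxy : α.imI = 0 ∧ α.imJ = 0
  · -- then imK ≠ 0 ; use h = i
    obtain ⟨hx, hy⟩ := hxy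
    have hh : qmk 0 1 0 0 ≠ 0 := by
      intro h0
      have := congrArg QuaternionAlgebra.imI h0
      simp at this
    refine ⟨qmk 0 1 0 0, hh, ?_⟩
    have key : qmk 0 1 0 0 * α = star α * qmk 0 1 0 0 := by
      apply Quaternion.ext <;> simp [hx, hy] <;> ring
    rw [key, mul_assoc, mul_inv_cancel₀ hh, mul_one]
  · -- use h = -y i + x j
    have hh : qmk 0 (-α.imJ) α.imI 0 ≠ 0 := by
      intro h0
      apply hxy
      have h1 := congrArg QuaternionAlgebra.imI h0
      have h2 := congrArg QuaternionAlgebra.imJ h0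
      simp at h1 h2
      exact ⟨h2, h1⟩
    refine ⟨qmk 0 (-α.imJ) α.imI 0, hh, ?_⟩
    have key : qmk 0 (-α.imJ) α.imI 0 * α = star α * qmk 0 (-α.imJ) α.imI 0 := by
      apply Quaternion.ext <;> simp <;> ring
    rw [key, mul_assoc, mul_inv_cancel₀ hh, mul_one]

/-- For a non-real quaternion α, C_α ∩ [α] = {α, ᾱ}. -/
theorem centralizer_inter_similarity (α : Quaternion ℝ) (hα : α.im ≠ 0) :
    {β : Quaternion ℝ | α * β = β * α} ∩
        {β : Quaternion ℝ | ∃ h : Quaternion ℝ, h ≠ 0 ∧ β = h * α * h⁻¹} =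
      {α, star α} := by
  ext β
  simp only [Set.mem_inter_iff, Set.mem_setOf_eq, Set.mem_insert_iff, Set.mem_singleton_iff]
  constructor
  · rintro ⟨hc, h, hh, hβ⟩
    set a := α.re with ha
    set x := α.imI with hx'
    set y := α.imJ with hy'
    set z := α.imK with hz'
    set b := β.re with hb'
    set p := β.imI with hp'
    set q := β.imJ with hq'
    set r := β.imK with hr'
    have hs : x ^ 2 + y ^ 2 + z ^ 2 ≠ 0 := by
      intro h0
      apply hα
      have hx : x = 0 := by nlinarith [sq_nonneg x, sq_nonneg y, sq_nonneg z]
      have hy : y = 0 := by nlinarith [sq_nonneg x, sq_nonneg y, sq_nonneg z]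
      have hz : z = 0 := by nlinarith [sq_nonneg x, sq_nonneg y, sq_nonneg z]
      ext <;> simp <;> assumption
    -- cross product equations from commutation
    have e1 : y * r - z * q = 0 := by
      have := congrArg QuaternionAlgebra.imI hc
      simp only [Quaternion.imI_mul] at this
      linarith
    have e2 : z * p - x * r = 0 := by
      have := congrArg QuaternionAlgebra.imJ hc
      simp only [Quaternion.imJ_mul] at this
      linarith
    have e3 : x * q - y * p = 0 := by
      have := congrArg QuaternionAlgebra.imK hc
      simp only [Quaternion.imK_mul] at this
      linarith
    -- same real part
    have hb : b = a := by
      show β.re = α.re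
      rw [hβ]
      exact re_conj h α hh
    -- same norm
    have hn : p ^ 2 + q ^ 2 + r ^ 2 = x ^ 2 + y ^ 2 + z ^ 2 := by
      have hnh : normSq h ≠ 0 := normSq_ne_zero.mpr hh
      have hN : normSq β = normSq α := by
        rw [hβ, map_mul, map_mul, map_inv₀]
        field_simp
      rw [Quaternion.normSq_def', Quaternion.normSq_def'] at hN
      have hb2 : b ^ 2 = a ^ 2 := by rw [hb]
      nlinarith [hN, hb2]
    set T := x * p + y * q + z * r with hT
    have hpx : (x ^ 2 + y ^ 2 + z ^ 2) * p = T * x := by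
      rw [hT]; linear_combination (-y) * e3 + z * e2
    have hqy : (x ^ 2 + y ^ 2 + z ^ 2) * q = T * y := by
      rw [hT]; linear_combination x * e3 + (-z) * e1
    have hrz : (x ^ 2 + y ^ 2 + z ^ 2) * r = T * z := by
      rw [hT]; linear_combination (-x) * e2 + y * e1
    have hT2 : (T - (x ^ 2 + y ^ 2 + z ^ 2)) * (T + (x ^ 2 + y ^ 2 + z ^ 2)) = 0 := by
      linear_combination (-p) * hpx + (-q) * hqy + (-r) * hrz + (x ^ 2 + y ^ 2 + z ^ 2) * hn
    rcases mul_eq_zero.mp hT2 with h1 | h1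
    · left
      have hTs : T = x ^ 2 + y ^ 2 + z ^ 2 := by linarith
      rw [hTs] at hpx hqy hrz
      have hp : p = x := mul_left_cancel₀ hs hpx
      have hq : q = y := mul_left_cancel₀ hs hqy
      have hr : r = z := mul_left_cancel₀ hs hrz
      apply Quaternion.ext
      exacts [hb, hp, hq, hr]
    · right
      have hTs : T = -(x ^ 2 + y ^ 2 + z ^ 2) := by linarith
      rw [hTs] at hpx hqy hrz
      have hp : p = -x := mul_left_cancel₀ hs
        (show (x ^ 2 + y ^ 2 + z ^ 2) * p = (x ^ 2 + y ^ 2 + z ^ 2) * (-x) by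
          linear_combination hpx)
      have hq : q = -y := mul_left_cancel₀ hs
        (show (x ^ 2 + y ^ 2 + z ^ 2) * q = (x ^ 2 + y ^ 2 + z ^ 2) * (-y) by
          linear_combination hqy)
      have hr : r = -z := mul_left_cancel₀ hs
        (show (x ^ 2 + y ^ 2 + z ^ 2) * r = (x ^ 2 + y ^ 2 + z ^ 2) * (-z) by
          linear_combination hrz)
      apply Quaternion.ext
      exacts [by simpa using hb, by simpa using hp, by simpa using hq, by simpa using hr]
  · rintro (rfl | rfl)
    · exact ⟨rfl, 1, one_ne_zero, by simp⟩
    · refine ⟨?_, star_similar α hα⟩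
      rw [Quaternion.self_mul_star, Quaternion.star_mul_self]
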